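/- Let G be a finite simple graph on the vertex set {1,…,n} with m edges. Then P_G has a unique minimal system of binomial generators, namely {f_{ij} : {i,j} an edge of G, i<j}: this set of m binomials generates P_G, every set of binomials generating P_G contains, for each edge {i,j}, either f_{ij} or −f_{ij} (each f_{ij} is indispensable), and no proper subset of {f_{ij}} generates P_G. -/

import Mathlib

open MvPolynomial


/-- The set of variables of `S`: one variable `x_{ii}` for each vertex `i` of `G` and two
variables `x_{ij}`, `x_{ji}` for each edge `{i,j}` of `G`. -/
abbrev VarSet (n : ℕ) (G : SimpleGraph (Fin n)) : Type :=
  {p : Fin n × Fin n // p.1 = p.2 ∨ G.Adj p.1 p.2}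

/-- The diagonal 2-minor `f_{ij} = x_{ii} x_{jj} - x_{ij} x_{ji}`. -/
noncomputable def fij (K : Type) [Field K] {n : ℕ} {G : SimpleGraph (Fin n)}
    {i j : Fin n} (h : G.Adj i j) : MvPolynomial (VarSet n G) K :=
  X ⟨(i, i), Or.inl rfl⟩ * X ⟨(j, j), Or.inl rfl⟩ -
    X ⟨(i, j), Or.inr h⟩ * X ⟨(j, i), Or.inr h.symm⟩

/-- The generating set `{f_{ij} : {i,j} an edge of G, i < j}`. -/
def genSet (K : Type) [Field K] (n : ℕ) (G : SimpleGraph (Fin n)) :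
    Set (MvPolynomial (VarSet n G) K) :=
  {f | ∃ i j : Fin n, ∃ h : G.Adj i j, i < j ∧ f = fij K h}

/-- The ideal `P_G` generated by the diagonal 2-minors `f_{ij}` for edges `{i,j}`, `i < j`. -/
noncomputable def PG (K : Type) [Field K] (n : ℕ) (G : SimpleGraph (Fin n)) :
    Ideal (MvPolynomial (VarSet n G) K) :=
  Ideal.span (genSet K n G)

/-- `f` is a binomial: a difference `x^u - x^v` of two distinct monomials. -/
def IsBinomial (K : Type) [Field K] {σ : Type} (f : MvPolynomial σ K) : Prop :=
  ∃ u v : σ →₀ ℕ, u ≠ v ∧ f = monomial u 1 - monomial v 1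

section helpers
open Finsupp
variable {σ : Type}

lemma sumv_zero (b : σ →₀ ℕ) (h : b.sum (fun _ k => k) = 0) : b = 0 := by
  classical
  rw [Finsupp.sum] at h
  ext t
  by_cases ht : t ∈ b.support
  · exact Finset.sum_eq_zero_iff.mp h t ht
  · simpa using Finsupp.notMem_support_iff.mp ht

lemma two_le_sumv (b : σ →₀ ℕ) {x t : σ} (hx : x ∈ b.support) (ht : t ∈ b.support)
    (hxt : x ≠ t) : b x + b t ≤ b.sum (fun _ k => k) := by
  classical
  rw [Finsupp.sum, ← Finset.sum_pair hxt]
  refine Finset.sum_le_sum_of_subset ?_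
  intro z hz
  rcases Finset.mem_insert.mp hz with rfl | hz
  · exact hx
  · rcases Finset.mem_singleton.mp hz with rfl
    exact ht

lemma sumv_one (b : σ →₀ ℕ) (h : b.sum (fun _ k => k) = 1) : ∃ x, b = single x 1 := by
  classical
  have hb : b ≠ 0 := by rintro rfl; simp [Finsupp.sum] at h
  obtain ⟨x, hx⟩ := Finsupp.support_nonempty_iff.mpr hb
  refine ⟨x, ?_⟩
  have hx1 : 1 ≤ b x := Nat.one_le_iff_ne_zero.mpr (Finsupp.mem_support_iff.mp hx)
  have hxle : b x ≤ 1 := by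
    rw [Finsupp.sum] at h
    rw [← h]
    exact Finset.single_le_sum (fun i _ => Nat.zero_le _) hx
  ext t
  rcases eq_or_ne t x with rfl | hne
  · simp only [Finsupp.single_eq_same]; omega
  · rw [Finsupp.single_eq_of_ne' (Ne.symm hne)]
    by_contra hbt
    have htm : t ∈ b.support := Finsupp.mem_support_iff.mpr hbt
    have := two_le_sumv b hx htm (Ne.symm hne)
    omega

lemma sumv_two (b : σ →₀ ℕ) (h : b.sum (fun _ k => k) = 2) :
    ∃ x y, b = single x 1 + single y 1 := by
  classical
  have hb : b ≠ 0 := by rintro rfl; simp [Finsupp.sum] at h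
  obtain ⟨x, hx⟩ := Finsupp.support_nonempty_iff.mpr hb
  have hx1 : 1 ≤ b x := Nat.one_le_iff_ne_zero.mpr (Finsupp.mem_support_iff.mp hx)
  have hxle : b x ≤ 2 := by
    rw [Finsupp.sum] at h
    rw [← h]
    exact Finset.single_le_sum (fun i _ => Nat.zero_le _) hx
  rcases (show b x = 1 ∨ b x = 2 by omega) with h1 | h2
  · have hsum2 : (single x (b x) + b.erase x).sum (fun _ k => k) = 2 := by
      rw [Finsupp.single_add_erase]; exact h
    rw [Finsupp.sum_add_index' (fun _ => rfl) (fun _ _ _ => rfl),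
      Finsupp.sum_single_index rfl] at hsum2
    obtain ⟨y, hy⟩ := sumv_one (b.erase x) (by omega)
    refine ⟨x, y, ?_⟩
    rw [← Finsupp.single_add_erase x b, h1, hy]
  · refine ⟨x, x, ?_⟩
    ext t
    rcases eq_or_ne t x with rfl | hne
    · simp only [Finsupp.add_apply, Finsupp.single_eq_same]; omega
    · rw [Finsupp.add_apply, Finsupp.single_eq_of_ne' (Ne.symm hne)]
      by_contra hbt
      have hbt' : b t ≠ 0 := by omega
      have htm : t ∈ b.support := Finsupp.mem_support_iff.mpr hbt'
      have := two_le_sumv b hx htm (Ne.symm hne)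
      omega

lemma pair_eq {u v i j : σ} (hij : i ≠ j)
    (h : single u (1:ℕ) + single v 1 = single i 1 + single j 1) :
    (u = i ∧ v = j) ∨ (u = j ∧ v = i) := by
  classical
  have hi := DFunLike.congr_fun h i
  have hj := DFunLike.congr_fun h j
  simp only [Finsupp.add_apply, Finsupp.single_apply, if_pos rfl,
    if_neg (Ne.symm hij), if_neg hij] at hi hj
  split_ifs at hi hj <;> simp_all

lemma pair_ne {r s t u : σ} (h1 : t ≠ r) (h2 : u ≠ r) :
    single r (1:ℕ) + single s 1 ≠ single t 1 + single u 1 := by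
  classical
  intro h
  have := DFunLike.congr_fun h r
  simp only [Finsupp.add_apply, Finsupp.single_apply, if_pos rfl, if_neg h1, if_neg h2] at this
  split_ifs at this <;> omega

lemma le_pair {x y : σ} (hxy : x ≠ y) {a : σ →₀ ℕ} (h : a ≤ single x 1 + single y 1) :
    a = 0 ∨ a = single x 1 ∨ a = single y 1 ∨ a = single x 1 + single y 1 := by
  classical
  have hpt : ∀ t, a t ≤ (single x 1 + single y 1 : σ →₀ ℕ) t := fun t => h t
  have key : a = single x (a x) + single y (a y) := by
    ext t
    rcases eq_or_ne t x with rfl | hnx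
    · simp [Finsupp.single_apply, Ne.symm hxy]
    · rcases eq_or_ne t y with rfl | hny
      · simp [Finsupp.single_apply, hxy]
      · have := hpt t
        rw [Finsupp.add_apply, Finsupp.single_eq_of_ne' (Ne.symm hnx),
          Finsupp.single_eq_of_ne' (Ne.symm hny)] at this ⊢
        omega
  have hax : a x ≤ 1 := by have := hpt x; simp [Finsupp.single_apply, Ne.symm hxy] at this; omega
  have hay : a y ≤ 1 := by have := hpt y; simp [Finsupp.single_apply, hxy] at this; omega
  rcases Nat.le_one_iff_eq_zero_or_eq_one.mp hax with h0 | h1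
  · rcases Nat.le_one_iff_eq_zero_or_eq_one.mp hay with g0 | g1
    · left; rw [key, h0, g0]; simp
    · right; right; left; rw [key, h0, g1]; simp
  · rcases Nat.le_one_iff_eq_zero_or_eq_one.mp hay with g0 | g1
    · right; left; rw [key, h1, g0]; simp
    · right; right; right; rw [key, h1, g1]

end helpers

section main

open MvPolynomial Finsupp

variable {K : Type} [Field K] {n : ℕ} {G : SimpleGraph (Fin n)}

/-- The diagonal variable `x_{ii}`. -/
def Vii (G : SimpleGraph (Fin n)) (i : Fin n) : VarSet n G := ⟨(i, i), Or.inl rfl⟩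

/-- The off-diagonal variable `x_{ij}`. -/
def Vij {i j : Fin n} (h : G.Adj i j) : VarSet n G := ⟨(i, j), Or.inr h⟩

lemma fij_eq {i j : Fin n} (h : G.Adj i j) :
    fij K h = monomial (single (Vii G i) 1 + single (Vii G j) 1) 1
      - monomial (single (Vij h) 1 + single (Vij h.symm) 1) 1 := by
  rw [fij]
  rw [show (X (⟨(i, i), Or.inl rfl⟩ : VarSet n G) : MvPolynomial (VarSet n G) K)
      = monomial (single (Vii G i) 1) 1 from rfl,
    show (X (⟨(j, j), Or.inl rfl⟩ : VarSet n G) : MvPolynomial (VarSet n G) K)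
      = monomial (single (Vii G j) 1) 1 from rfl,
    show (X (⟨(i, j), Or.inr h⟩ : VarSet n G) : MvPolynomial (VarSet n G) K)
      = monomial (single (Vij h) 1) 1 from rfl,
    show (X (⟨(j, i), Or.inr h.symm⟩ : VarSet n G) : MvPolynomial (VarSet n G) K)
      = monomial (single (Vij h.symm) 1) 1 from rfl,
    monomial_mul, monomial_mul, one_mul]

lemma extract {F : Set (MvPolynomial (VarSet n G) K)} {m0 : VarSet n G →₀ ℕ}
    {g : MvPolynomial (VarSet n G) K} (hg : g ∈ Ideal.span F) (hc : coeff m0 g ≠ 0) :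
    ∃ f ∈ F, ∃ u, u ≤ m0 ∧ coeff u f ≠ 0 := by
  classical
  by_contra hnot
  push_neg at hnot
  have hall : ∀ u, u ≤ m0 → coeff u g = 0 := by
    clear hc
    induction hg using Submodule.span_induction with
    | mem x hx => exact fun u hu => hnot x hx u hu
    | zero => intro u _; simp
    | add x y _ _ ihx ihy => intro u hu; rw [coeff_add, ihx u hu, ihy u hu, add_zero]
    | smul a x _ ihx =>
      intro u hu
      rw [smul_eq_mul, coeff_mul]
      refine Finset.sum_eq_zero ?_
      rintro ⟨c, d⟩ hcd
      rw [Finset.HasAntidiagonal.mem_antidiagonal] at hcd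
      have hd : d ≤ m0 := le_trans (by rw [← hcd]; exact le_add_self) hu
      rw [ihx d hd, mul_zero]
  exact hc (hall m0 le_rfl)

lemma mapDomain_eq_of_mem_PG {a b : VarSet n G →₀ ℕ}
    (hm : (monomial a 1 - monomial b 1 : MvPolynomial (VarSet n G) K) ∈ PG K n G)
    (π : VarSet n G → Fin n)
    (hπ : ∀ f ∈ genSet K n G, rename π f = (0 : MvPolynomial (Fin n) K)) :
    Finsupp.mapDomain π a = Finsupp.mapDomain π b := by
  have hle : PG K n G ≤ RingHom.ker (rename π : MvPolynomial (VarSet n G) K →ₐ[K]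
      MvPolynomial (Fin n) K).toRingHom := by
    rw [PG, Ideal.span_le]
    intro f hf
    simpa [RingHom.mem_ker] using hπ f hf
  have h0 : rename π (monomial a 1 - monomial b 1 : MvPolynomial (VarSet n G) K) = 0 := hle hm
  rw [map_sub, rename_monomial, rename_monomial, sub_eq_zero] at h0
  rcases (monomial_eq_monomial_iff _ _ _ _).mp h0 with ⟨he, _⟩ | ⟨h1, _⟩
  · exact he
  · exact absurd h1 one_ne_zero

lemma genker1 : ∀ f ∈ genSet K n G, rename (fun x : VarSet n G => x.1.1) f = 0 := by
  rintro f ⟨a, b, hab, _, rfl⟩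
  rw [fij]
  simp only [map_sub, map_mul, rename_X]
  ring

lemma genker2 : ∀ f ∈ genSet K n G, rename (fun x : VarSet n G => x.1.2) f = 0 := by
  rintro f ⟨a, b, hab, _, rfl⟩
  rw [fij]
  simp only [map_sub, map_mul, rename_X]
  ring

lemma core {σ τ : Type} {p q : σ → τ} {vii vjj vij vji : σ} {i j : τ} (hij : i ≠ j)
    (hpii : p vii = i) (hqii : q vii = i) (hpjj : p vjj = j) (hqjj : q vjj = j)
    (hpij : p vij = i) (hqij : q vij = j) (hpji : p vji = j) (hqji : q vji = i)
    (uii : ∀ x, p x = i → q x = i → x = vii)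
    (ujj : ∀ x, p x = j → q x = j → x = vjj)
    (uij : ∀ x, p x = i → q x = j → x = vij)
    (uji : ∀ x, p x = j → q x = i → x = vji)
    {a b : σ →₀ ℕ} (hle : a ≤ single vii 1 + single vjj 1) (hab : a ≠ b)
    (e1 : Finsupp.mapDomain p a = Finsupp.mapDomain p b)
    (e2 : Finsupp.mapDomain q a = Finsupp.mapDomain q b) :
    a = single vii 1 + single vjj 1 ∧ b = single vij 1 + single vji 1 := by
  classical
  have dii : vii ≠ vjj := fun hq => hij (by rw [← hpii, hq, hpjj])
  have hsum : ∀ (π : σ → τ) (c : σ →₀ ℕ),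
      (Finsupp.mapDomain π c).sum (fun _ k => k) = c.sum (fun _ k => k) :=
    fun π c => Finsupp.sum_mapDomain_index (fun _ => rfl) (fun _ _ _ => rfl)
  rcases le_pair dii hle with h0 | h1 | h1 | h3
  · exfalso
    subst h0
    have hb0 : b = 0 := sumv_zero b
      (by rw [← hsum p b, ← e1, Finsupp.mapDomain_zero, Finsupp.sum_zero_index])
    exact hab hb0.symm
  · exfalso
    subst h1
    have hbs : b.sum (fun _ k => k) = 1 := by
      rw [← hsum p b, ← e1, Finsupp.mapDomain_single, Finsupp.sum_single_index rfl]
    obtain ⟨x, rfl⟩ := sumv_one b hbs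
    rw [Finsupp.mapDomain_single, Finsupp.mapDomain_single, hpii] at e1
    rw [Finsupp.mapDomain_single, Finsupp.mapDomain_single, hqii] at e2
    have hpx : p x = i := ((Finsupp.single_left_inj one_ne_zero).mp e1).symm
    have hqx : q x = i := ((Finsupp.single_left_inj one_ne_zero).mp e2).symm
    exact hab (by rw [uii x hpx hqx])
  · exfalso
    subst h1
    have hbs : b.sum (fun _ k => k) = 1 := by
      rw [← hsum p b, ← e1, Finsupp.mapDomain_single, Finsupp.sum_single_index rfl]
    obtain ⟨x, rfl⟩ := sumv_one b hbs
    rw [Finsupp.mapDomain_single, Finsupp.mapDomain_single, hpjj] at e1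
    rw [Finsupp.mapDomain_single, Finsupp.mapDomain_single, hqjj] at e2
    have hpx : p x = j := ((Finsupp.single_left_inj one_ne_zero).mp e1).symm
    have hqx : q x = j := ((Finsupp.single_left_inj one_ne_zero).mp e2).symm
    exact hab (by rw [ujj x hpx hqx])
  · subst h3
    refine ⟨rfl, ?_⟩
    have hbs : b.sum (fun _ k => k) = 2 := by
      rw [← hsum p b, ← e1, Finsupp.mapDomain_add, Finsupp.mapDomain_single,
        Finsupp.mapDomain_single, Finsupp.sum_add_index' (fun _ => rfl) (fun _ _ _ => rfl),
        Finsupp.sum_single_index rfl, Finsupp.sum_single_index rfl]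
    obtain ⟨x, y, rfl⟩ := sumv_two b hbs
    rw [Finsupp.mapDomain_add, Finsupp.mapDomain_single, Finsupp.mapDomain_single, hpii, hpjj,
      Finsupp.mapDomain_add, Finsupp.mapDomain_single, Finsupp.mapDomain_single] at e1
    rw [Finsupp.mapDomain_add, Finsupp.mapDomain_single, Finsupp.mapDomain_single, hqii, hqjj,
      Finsupp.mapDomain_add, Finsupp.mapDomain_single, Finsupp.mapDomain_single] at e2
    rcases pair_eq hij e1.symm with ⟨hpx, hpy⟩ | ⟨hpx, hpy⟩ <;>
      rcases pair_eq hij e2.symm with ⟨hqx, hqy⟩ | ⟨hqx, hqy⟩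
    · exact absurd (show single vii 1 + single vjj 1 = single x 1 + single y 1 by
        rw [uii x hpx hqx, ujj y hpy hqy]) hab
    · rw [uij x hpx hqx, uji y hpy hqy]
    · rw [uji x hpx hqx, uij y hpy hqy]
      exact add_comm _ _
    · exact absurd (show single vii 1 + single vjj 1 = single x 1 + single y 1 by
        rw [ujj x hpx hqx, uii y hpy hqy, add_comm]) hab

lemma indisp {i j : Fin n} (h : G.Adj i j) (hij : i < j)
    (F : Set (MvPolynomial (VarSet n G) K)) (hbin : ∀ f ∈ F, IsBinomial K f)
    (hspan : Ideal.span F = PG K n G) : fij K h ∈ F ∨ -fij K h ∈ F := by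
  classical
  have hne : i ≠ j := ne_of_lt hij
  have d2 : Vij h ≠ Vii G i := fun hq => hne (congrArg (fun z : VarSet n G => z.1.2) hq).symm
  have d3 : Vij h.symm ≠ Vii G i := fun hq => hne (congrArg (fun z : VarSet n G => z.1.1) hq).symm
  have hm0w : (single (Vii G i) 1 + single (Vii G j) 1 : VarSet n G →₀ ℕ)
      ≠ single (Vij h) 1 + single (Vij h.symm) 1 := pair_ne d2 d3
  have hfijPG : fij K h ∈ Ideal.span F := by
    rw [hspan]; exact Ideal.subset_span ⟨i, j, h, hij, rfl⟩
  have hcoef : coeff (single (Vii G i) 1 + single (Vii G j) 1) (fij K h) ≠ 0 := by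
    rw [fij_eq h, coeff_sub, coeff_monomial, coeff_monomial, if_pos rfl,
      if_neg (Ne.symm hm0w), sub_zero]
    exact one_ne_zero
  obtain ⟨f, hfF, u, hu, hcu⟩ := extract hfijPG hcoef
  obtain ⟨a, b, hab, rfl⟩ := hbin f hfF
  have hfPG : (monomial a 1 - monomial b 1 : MvPolynomial (VarSet n G) K) ∈ PG K n G := by
    rw [← hspan]; exact Ideal.subset_span hfF
  have e1 := mapDomain_eq_of_mem_PG hfPG (fun x : VarSet n G => x.1.1) genker1
  have e2 := mapDomain_eq_of_mem_PG hfPG (fun x : VarSet n G => x.1.2) genker2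
  have uii : ∀ x : VarSet n G, x.1.1 = i → x.1.2 = i → x = Vii G i :=
    fun x hc hd => Subtype.ext (Prod.ext hc hd)
  have ujj : ∀ x : VarSet n G, x.1.1 = j → x.1.2 = j → x = Vii G j :=
    fun x hc hd => Subtype.ext (Prod.ext hc hd)
  have uij : ∀ x : VarSet n G, x.1.1 = i → x.1.2 = j → x = Vij h :=
    fun x hc hd => Subtype.ext (Prod.ext hc hd)
  have uji : ∀ x : VarSet n G, x.1.1 = j → x.1.2 = i → x = Vij h.symm :=
    fun x hc hd => Subtype.ext (Prod.ext hc hd)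
  have hua : u = a ∨ u = b := by
    by_contra hcon
    push_neg at hcon
    apply hcu
    rw [coeff_sub, coeff_monomial, coeff_monomial, if_neg (fun hq => hcon.1 hq.symm),
      if_neg (fun hq => hcon.2 hq.symm), sub_zero]
  rcases hua with rfl | rfl
  · obtain ⟨ha, hb⟩ := core hne rfl rfl rfl rfl rfl rfl rfl rfl uii ujj uij uji hu hab e1 e2
    left
    have hfe : fij K h = monomial u 1 - monomial b 1 := by rw [fij_eq h, ← ha, ← hb]
    rw [hfe]; exact hfF
  · obtain ⟨hb, ha⟩ := core hne rfl rfl rfl rfl rfl rfl rfl rfl uii ujj uij uji hu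
      (Ne.symm hab) e1.symm e2.symm
    right
    have hfe : -fij K h = monomial a 1 - monomial u 1 := by
      rw [fij_eq h, ← hb, ← ha, neg_sub]
    rw [hfe]; exact hfF

lemma genSet_binomial : ∀ f ∈ genSet K n G, IsBinomial K f := by
  rintro f ⟨i, j, hadj, hij, rfl⟩
  have hne : i ≠ j := ne_of_lt hij
  exact ⟨_, _, pair_ne (fun hq => hne (congrArg (fun z : VarSet n G => z.1.2) hq).symm)
    (fun hq => hne (congrArg (fun z : VarSet n G => z.1.1) hq).symm), fij_eq hadj⟩

lemma part3 (F : Set (MvPolynomial (VarSet n G) K)) (hss : F ⊂ genSet K n G) :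
    Ideal.span F ≠ PG K n G := by
  classical
  intro hspan
  obtain ⟨g, hgG, hgF⟩ := Set.exists_of_ssubset hss
  obtain ⟨i, j, hadj, hij, rfl⟩ := hgG
  have hne : i ≠ j := ne_of_lt hij
  have hbin : ∀ f ∈ F, IsBinomial K f := fun f hf => genSet_binomial f (hss.1 hf)
  rcases indisp hadj hij F hbin hspan with hin | hin
  · exact hgF hin
  · obtain ⟨k, l, hkl, hklt, heq⟩ := hss.1 hin
    have hknl : k ≠ l := ne_of_lt hklt
    by_cases hmm : (single (Vii G i) 1 + single (Vii G j) 1 : VarSet n G →₀ ℕ)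
        = single (Vii G k) 1 + single (Vii G l) 1
    · have hdkl : Vii G k ≠ Vii G l :=
        fun hq => hknl (congrArg (fun z : VarSet n G => z.1.1) hq)
      rcases pair_eq hdkl hmm with ⟨h1, h2⟩ | ⟨h1, h2⟩
      · have hik : i = k := congrArg (fun z : VarSet n G => z.1.1) h1
        have hjl : j = l := congrArg (fun z : VarSet n G => z.1.1) h2
        subst hik; subst hjl
        have hfe : fij K hkl = fij K hadj := rfl
        rw [hfe] at heq
        exact hgF (heq ▸ hin)
      · have hil : i = l := congrArg (fun z : VarSet n G => z.1.1) h1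
        have hjk : j = k := congrArg (fun z : VarSet n G => z.1.1) h2
        subst hil; subst hjk
        exact lt_irrefl i (hij.trans hklt)
    · have h2 : (single (Vij hadj) 1 + single (Vij hadj.symm) 1 : VarSet n G →₀ ℕ)
          ≠ single (Vii G k) 1 + single (Vii G l) 1 :=
        pair_ne (fun hq => hne ((congrArg (fun z : VarSet n G => z.1.1) hq).symm.trans
            (congrArg (fun z : VarSet n G => z.1.2) hq)))
          (fun hq => hne ((congrArg (fun z : VarSet n G => z.1.1) hq).symm.trans
            (congrArg (fun z : VarSet n G => z.1.2) hq)))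
      have h3 : (single (Vij hkl) 1 + single (Vij hkl.symm) 1 : VarSet n G →₀ ℕ)
          ≠ single (Vii G k) 1 + single (Vii G l) 1 :=
        pair_ne (fun hq => hknl (congrArg (fun z : VarSet n G => z.1.2) hq))
          (fun hq => hknl (congrArg (fun z : VarSet n G => z.1.1) hq).symm)
      have hc := congrArg (coeff (single (Vii G k) 1 + single (Vii G l) 1)) heq
      rw [fij_eq hadj, fij_eq hkl, coeff_neg, coeff_sub, coeff_sub, coeff_monomial,
        coeff_monomial, coeff_monomial, coeff_monomial, if_neg hmm, if_neg h2,
        if_pos rfl, if_neg h3] at hc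
      simp only [sub_zero, neg_zero, sub_self, neg_sub] at hc
      exact one_ne_zero hc.symm

end main

/-- `P_G` has a unique minimal system of binomial generators, namely
`{f_{ij} : {i,j} ∈ E(G), i < j}`: this set generates `P_G`; every set of binomials generating
`P_G` contains each `f_{ij}` up to sign (each `f_{ij}` is indispensable); and no proper subset
of `{f_{ij}}` generates `P_G`. -/
theorem PG_unique_minimal_binomial_generators (K : Type) [Field K] (n : ℕ)
    (G : SimpleGraph (Fin n)) :
    Ideal.span (genSet K n G) = PG K n G
      ∧ (∀ F : Set (MvPolynomial (VarSet n G) K), (∀ f ∈ F, IsBinomial K f) →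
          Ideal.span F = PG K n G →
          ∀ i j : Fin n, ∀ h : G.Adj i j, i < j → (fij K h ∈ F ∨ -fij K h ∈ F))
      ∧ (∀ F : Set (MvPolynomial (VarSet n G) K), F ⊂ genSet K n G →
          Ideal.span F ≠ PG K n G) :=
  ⟨rfl, fun F hbin hspan i j h hij => indisp h hij F hbin hspan, fun F hss => part3 F hss⟩
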